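/- For R ≤ R_cr¹(P_{XY}) (the critical rate, the largest R for which e_r¹(R, P_{XY}) meets its supporting line of slope one), the exponent simplifies to e_r¹(R, P_{XY}) = min{D(Q ‖ P_{XY}) : Q with H_Q(X̃|Ỹ) ≥ R}. In particular, for such R the clipped-rate term |R − H_Q(X̃|Ỹ)|⁺ vanishes at the minimizer. -/

import Mathlib

/-- Kullback-Leibler divergence (base 2) between distributions on a finite set. -/
noncomputable def klDiv2 {A : Type*} [Fintype A] (Q P : A → ℝ) : ℝ :=
  ∑ a, Q a * Real.logb 2 (Q a / P a)

/-- Conditional entropy (base 2) of the first coordinate given the second. -/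
noncomputable def condEnt1 {A B : Type*} [Fintype A] [Fintype B] (Q : A × B → ℝ) : ℝ :=
  -∑ z : A × B, Q z * Real.logb 2 (Q z / (∑ a, Q (a, z.2)))

/-- The random-coding error exponent
`e_r(R, P) = min_Q {D(Q‖P) + |R − H_Q(X̃|Ỹ)|⁺}`. -/
noncomputable def erExp {A B : Type*} [Fintype A] [Fintype B]
    (R : ℝ) (P : A × B → ℝ) : ℝ :=
  sInf { e | ∃ Q : A × B → ℝ, (∀ z, 0 ≤ Q z) ∧ (∑ z : A × B, Q z = 1) ∧
    e = klDiv2 Q P + max (R - condEnt1 Q) 0 }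

/-- The intercept of the supporting line of slope one of the curve `R ↦ e_r(R, P)`. -/
noncomputable def slopeOneIntercept {A B : Type*} [Fintype A] [Fintype B]
    (P : A × B → ℝ) : ℝ :=
  sInf { b | ∃ R' : ℝ, b = erExp R' P - R' }

/-- The critical rate `R_cr(P)`: the rate at which the curve `e_r(·, P)` meets its
supporting line of slope one. -/
noncomputable def Rcr {A B : Type*} [Fintype A] [Fintype B] (P : A × B → ℝ) : ℝ :=
  sInf { R' | erExp R' P = R' + slopeOneIntercept P }

namespace Stmt17Aux
set_option linter.unusedSectionVars false


lemma mul_log_div_ge {p q : ℝ} (hp : 0 ≤ p) (hq : 0 < q) :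
    p - q ≤ p * Real.log (p / q) := by
  rcases hp.eq_or_lt with h | h
  · simp only [← h, zero_mul, zero_sub]
    linarith
  · have h1 : Real.log (q / p) ≤ q / p - 1 := Real.log_le_sub_one_of_pos (by positivity)
    rw [Real.log_div hq.ne' h.ne'] at h1
    rw [Real.log_div h.ne' hq.ne']
    have h2 : p * (Real.log q - Real.log p) ≤ p * (q / p - 1) :=
      mul_le_mul_of_nonneg_left h1 h.le
    have hqp : p * (q / p) = q := by field_simp
    nlinarith

lemma logSum2 {a b c d : ℝ} (ha : 0 ≤ a) (hb : 0 ≤ b) (hc : 0 < c) (hd : 0 < d) :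
    (a + b) * Real.log ((a + b) / (c + d)) ≤ a * Real.log (a / c) + b * Real.log (b / d) := by
  rcases (by linarith : (0:ℝ) ≤ a + b).eq_or_lt with h | h
  · have ha0 : a = 0 := by linarith
    have hb0 : b = 0 := by linarith
    simp [ha0, hb0]
  · have hcd : 0 < c + d := by linarith
    set s : ℝ := (a + b) / (c + d) with hs
    have hspos : 0 < s := by positivity
    have k1 : a - c * s ≤ a * Real.log (a / (c * s)) := mul_log_div_ge ha (by positivity)
    have k2 : b - d * s ≤ b * Real.log (b / (d * s)) := mul_log_div_ge hb (by positivity)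
    have e1 : a * Real.log (a / (c * s)) = a * Real.log (a / c) - a * Real.log s := by
      rcases ha.eq_or_lt with h0 | h0
      · simp [← h0]
      · rw [show a / (c * s) = a / c / s from (div_div a c s).symm, Real.log_div (by positivity) hspos.ne']
        ring
    have e2 : b * Real.log (b / (d * s)) = b * Real.log (b / d) - b * Real.log s := by
      rcases hb.eq_or_lt with h0 | h0
      · simp [← h0]
      · rw [show b / (d * s) = b / d / s from (div_div b d s).symm, Real.log_div (by positivity) hspos.ne']
        ring
    have hsum : (c + d) * s = a + b := by
      rw [hs]; field_simp
    nlinarith [k1, k2]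

lemma phi_convex {t p0 p1 q0 q1 : ℝ} (ht0 : 0 ≤ t) (ht1 : t ≤ 1)
    (hp0 : 0 ≤ p0) (hp1 : 0 ≤ p1) (hq0 : 0 ≤ q0) (hq1 : 0 ≤ q1)
    (h0 : q0 = 0 → p0 = 0) (h1 : q1 = 0 → p1 = 0) :
    ((1-t)*p0 + t*p1) * Real.log (((1-t)*p0 + t*p1) / ((1-t)*q0 + t*q1)) ≤
      (1-t) * (p0 * Real.log (p0 / q0)) + t * (p1 * Real.log (p1 / q1)) := by
  rcases ht0.eq_or_lt with h | htpos
  · simp [← h]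
  rcases ht1.eq_or_lt with h | htlt
  · simp [h]
  have h1t : 0 < 1 - t := by linarith
  rcases hq0.eq_or_lt with hq0' | hq0'
  · have hp0' : p0 = 0 := h0 hq0'.symm
    rcases hq1.eq_or_lt with hq1' | hq1'
    · have hp1' : p1 = 0 := h1 hq1'.symm
      simp [hp0', hp1', ← hq0', ← hq1']
    · have : (t*p1) / (t*q1) = p1 / q1 := mul_div_mul_left _ _ (ne_of_gt htpos)
      rw [hp0', ← hq0']
      simp only [mul_zero, zero_add, add_zero]
      rw [this]
      have : t * p1 * Real.log (p1 / q1) = t * (p1 * Real.log (p1/q1)) := by ring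
      rw [this]
      simp
  rcases hq1.eq_or_lt with hq1' | hq1'
  · have hp1' : p1 = 0 := h1 hq1'.symm
    have : ((1-t)*p0) / ((1-t)*q0) = p0 / q0 := mul_div_mul_left _ _ (ne_of_gt h1t)
    rw [hp1', ← hq1']
    simp only [mul_zero, add_zero]
    rw [this]
    have : (1-t) * p0 * Real.log (p0 / q0) = (1-t) * (p0 * Real.log (p0/q0)) := by ring
    rw [this]
    simp
  · have key := logSum2 (a := (1-t)*p0) (b := t*p1) (c := (1-t)*q0) (d := t*q1)
      (by positivity) (by positivity) (by positivity) (by positivity)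
    have r0 : ((1-t)*p0) / ((1-t)*q0) = p0 / q0 := mul_div_mul_left _ _ (ne_of_gt h1t)
    have r1 : (t*p1) / (t*q1) = p1 / q1 := mul_div_mul_left _ _ (ne_of_gt htpos)
    rw [r0, r1] at key
    calc ((1-t)*p0 + t*p1) * Real.log (((1-t)*p0 + t*p1) / ((1-t)*q0 + t*q1))
        ≤ (1-t)*p0 * Real.log (p0/q0) + t*p1 * Real.log (p1/q1) := key
      _ = (1-t) * (p0 * Real.log (p0 / q0)) + t * (p1 * Real.log (p1 / q1)) := by ring


variable {X Y : Type} [Fintype X] [Fintype Y]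

noncomputable def entF (Q : X × Y → ℝ) : ℝ := ∑ z, Q z * Real.logb 2 (Q z)

noncomputable def mEntF (Q : X × Y → ℝ) : ℝ :=
  ∑ y, (∑ a, Q (a, y)) * Real.logb 2 (∑ a, Q (a, y))

noncomputable def linF (P Q : X × Y → ℝ) : ℝ := ∑ z, Q z * Real.logb 2 (P z)

lemma margin_pos {Q : X × Y → ℝ} (hQ : ∀ z, 0 ≤ Q z) {z : X × Y} (h : 0 < Q z) :
    0 < ∑ a, Q (a, z.2) := by
  have h1 : Q (z.1, z.2) ≤ ∑ a, Q (a, z.2) :=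
    Finset.single_le_sum (fun a _ => hQ (a, z.2)) (Finset.mem_univ z.1)
  rw [Prod.mk.eta] at h1
  linarith

lemma klDiv2_eq (P Q : X × Y → ℝ) (hP : ∀ z, 0 < P z) (hQ : ∀ z, 0 ≤ Q z) :
    klDiv2 Q P = entF Q - linF P Q := by
  rw [klDiv2, entF, linF, ← Finset.sum_sub_distrib]
  refine Finset.sum_congr rfl fun z _ => ?_
  rcases (hQ z).eq_or_lt with h | h
  · simp [← h]
  · rw [Real.logb_div h.ne' (hP z).ne']; ring

lemma condEnt1_eq (Q : X × Y → ℝ) (hQ : ∀ z, 0 ≤ Q z) :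
    condEnt1 Q = mEntF Q - entF Q := by
  have key : ∑ z : X × Y, Q z * Real.logb 2 (Q z / ∑ a, Q (a, z.2))
      = entF Q - mEntF Q := by
    have h1 : ∀ z : X × Y, Q z * Real.logb 2 (Q z / ∑ a, Q (a, z.2))
        = Q z * Real.logb 2 (Q z) - Q z * Real.logb 2 (∑ a, Q (a, z.2)) := by
      intro z
      rcases (hQ z).eq_or_lt with h | h
      · simp [← h]
      · rw [Real.logb_div h.ne' (margin_pos hQ h).ne']; ring
    calc ∑ z : X × Y, Q z * Real.logb 2 (Q z / ∑ a, Q (a, z.2))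
        = ∑ z : X × Y, (Q z * Real.logb 2 (Q z) - Q z * Real.logb 2 (∑ a, Q (a, z.2))) :=
          Finset.sum_congr rfl fun z _ => h1 z
      _ = entF Q - ∑ z : X × Y, Q z * Real.logb 2 (∑ a, Q (a, z.2)) := by
          rw [Finset.sum_sub_distrib]; rfl
      _ = entF Q - mEntF Q := by
          congr 1
          rw [Fintype.sum_prod_type_right]
          refine Finset.sum_congr rfl fun y _ => ?_
          rw [Finset.sum_mul]
  rw [condEnt1, key]; ring

lemma cont_mul_logb : Continuous fun x : ℝ => x * Real.logb 2 x := by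
  have h : (fun x : ℝ => x * Real.logb 2 x) = fun x => (x * Real.log x) / Real.log 2 := by
    funext x; rw [Real.logb]; ring
  rw [h]
  exact Real.continuous_mul_log.div_const _

lemma cont_entF : Continuous (entF (X := X) (Y := Y)) :=
  continuous_finset_sum _ fun z _ => cont_mul_logb.comp (continuous_apply z)

lemma cont_mEntF : Continuous (mEntF (X := X) (Y := Y)) :=
  continuous_finset_sum _ fun y _ =>
    cont_mul_logb.comp (continuous_finset_sum _ fun a _ => continuous_apply (a, y))

lemma cont_linF (P : X × Y → ℝ) : Continuous (linF P) :=
  continuous_finset_sum _ fun z _ => (continuous_apply z).mul continuous_const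

lemma klDiv2_nonneg (P Q : X × Y → ℝ) (hP : ∀ z, 0 < P z) (hQ : ∀ z, 0 ≤ Q z)
    (hQ1 : ∑ z : X × Y, Q z = 1) (hP1 : ∑ z : X × Y, P z = 1) : 0 ≤ klDiv2 Q P := by
  have h2 : (0:ℝ) < Real.log 2 := Real.log_pos one_lt_two
  have hsum : 0 ≤ ∑ z : X × Y, Q z * Real.log (Q z / P z) := by
    calc (0:ℝ) = ∑ z : X × Y, (Q z - P z) := by rw [Finset.sum_sub_distrib, hQ1, hP1]; ring
    _ ≤ _ := Finset.sum_le_sum fun z _ => mul_log_div_ge (hQ z) (hP z)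
  have heq : klDiv2 Q P = (∑ z : X × Y, Q z * Real.log (Q z / P z)) / Real.log 2 := by
    rw [klDiv2, Finset.sum_div]
    exact Finset.sum_congr rfl fun z _ => by rw [Real.logb]; ring
  rw [heq]; positivity

/-- The function `D(Q‖P) - H_Q(X|Y)`, in natural log form. -/
noncomputable def DHlog (P Q : X × Y → ℝ) : ℝ :=
  ∑ z : X × Y, (Q z * Real.log (Q z / P z) + Q z * Real.log (Q z / ∑ a, Q (a, z.2)))

lemma DH_eq (P Q : X × Y → ℝ) :
    klDiv2 Q P - condEnt1 Q = DHlog P Q / Real.log 2 := by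
  rw [klDiv2, condEnt1, DHlog, sub_neg_eq_add, ← Finset.sum_add_distrib, Finset.sum_div]
  exact Finset.sum_congr rfl fun z _ => by rw [Real.logb, Real.logb]; ring

lemma DHlog_convex {P Q0 Q1 : X × Y → ℝ} (hP : ∀ z, 0 < P z)
    (hQ0 : ∀ z, 0 ≤ Q0 z) (hQ1 : ∀ z, 0 ≤ Q1 z) {t : ℝ} (ht0 : 0 ≤ t) (ht1 : t ≤ 1) :
    DHlog P (fun z => (1-t) * Q0 z + t * Q1 z)
      ≤ (1-t) * DHlog P Q0 + t * DHlog P Q1 := by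
  rw [DHlog, DHlog, DHlog, Finset.mul_sum, Finset.mul_sum, ← Finset.sum_add_distrib]
  refine Finset.sum_le_sum fun z _ => ?_
  have hmarg : (∑ a, ((1-t) * Q0 (a, z.2) + t * Q1 (a, z.2)))
      = (1-t) * (∑ a, Q0 (a, z.2)) + t * (∑ a, Q1 (a, z.2)) := by
    rw [Finset.sum_add_distrib, Finset.mul_sum, Finset.mul_sum]
  have hM0 : (0:ℝ) ≤ ∑ a, Q0 (a, z.2) := Finset.sum_nonneg fun a _ => hQ0 _
  have hM1 : (0:ℝ) ≤ ∑ a, Q1 (a, z.2) := Finset.sum_nonneg fun a _ => hQ1 _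
  have c1 := phi_convex (t := t) (p0 := Q0 z) (p1 := Q1 z) (q0 := P z) (q1 := P z)
    ht0 ht1 (hQ0 z) (hQ1 z) (hP z).le (hP z).le
    (fun h => absurd h (hP z).ne') (fun h => absurd h (hP z).ne')
  have c2 := phi_convex (t := t) (p0 := Q0 z) (p1 := Q1 z)
    (q0 := ∑ a, Q0 (a, z.2)) (q1 := ∑ a, Q1 (a, z.2))
    ht0 ht1 (hQ0 z) (hQ1 z) hM0 hM1
    (fun h => by
      have := (Finset.sum_eq_zero_iff_of_nonneg (fun a _ => hQ0 (a, z.2))).1 h z.1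
        (Finset.mem_univ _)
      rwa [Prod.mk.eta] at this)
    (fun h => by
      have := (Finset.sum_eq_zero_iff_of_nonneg (fun a _ => hQ1 (a, z.2))).1 h z.1
        (Finset.mem_univ _)
      rwa [Prod.mk.eta] at this)
  rw [hmarg]
  have hPz : (1-t) * P z + t * P z = P z := by ring
  rw [hPz] at c1
  linarith


lemma sInf_image_eq {Z : Type*} {f : Z → ℝ} {K : Set Z} {x : Z}
    (hx : x ∈ K) (hmin : ∀ y ∈ K, f x ≤ f y) : sInf (f '' K) = f x := by
  refine le_antisymm (csInf_le ⟨f x, ?_⟩ ⟨x, hx, rfl⟩) (le_csInf ⟨f x, x, hx, rfl⟩ ?_) <;>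
    · rintro e ⟨y, hy, rfl⟩
      exact hmin y hy

variable {X Y : Type} [Fintype X] [Fintype Y]

lemma set_eq (f : (X × Y → ℝ) → ℝ) :
    {e | ∃ Q : X × Y → ℝ, (∀ z, 0 ≤ Q z) ∧ (∑ z : X × Y, Q z = 1) ∧ e = f Q}
      = f '' stdSimplex ℝ (X × Y) := by
  ext e
  constructor
  · rintro ⟨Q, h1, h2, rfl⟩; exact ⟨Q, ⟨h1, h2⟩, rfl⟩
  · rintro ⟨Q, ⟨h1, h2⟩, rfl⟩; exact ⟨Q, h1, h2, rfl⟩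

lemma erExp_min (P : X × Y → ℝ) (hP : ∀ z, 0 < P z) (hP1 : ∑ z : X × Y, P z = 1) (R : ℝ) :
    ∃ Q ∈ stdSimplex ℝ (X × Y),
      erExp R P = klDiv2 Q P + max (R - condEnt1 Q) 0 ∧
      ∀ Q' ∈ stdSimplex ℝ (X × Y),
        klDiv2 Q P + max (R - condEnt1 Q) 0 ≤ klDiv2 Q' P + max (R - condEnt1 Q') 0 := by
  have hcont : Continuous fun Q : X × Y → ℝ =>
      (entF Q - linF P Q) + max (R - (mEntF Q - entF Q)) 0 :=
    ((cont_entF.sub (cont_linF P)).add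
      ((continuous_const.sub (cont_mEntF.sub cont_entF)).max continuous_const))
  have hJeq : ∀ Q ∈ stdSimplex ℝ (X × Y), klDiv2 Q P + max (R - condEnt1 Q) 0
      = (entF Q - linF P Q) + max (R - (mEntF Q - entF Q)) 0 := by
    intro Q hQ
    rw [klDiv2_eq P Q hP hQ.1, condEnt1_eq Q hQ.1]
  have hne : (stdSimplex ℝ (X × Y)).Nonempty := ⟨P, fun z => (hP z).le, hP1⟩
  obtain ⟨Q, hQ, hmin⟩ := (isCompact_stdSimplex ℝ (X × Y)).exists_isMinOn hne hcont.continuousOn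
  have hmin' : ∀ Q' ∈ stdSimplex ℝ (X × Y),
      klDiv2 Q P + max (R - condEnt1 Q) 0 ≤ klDiv2 Q' P + max (R - condEnt1 Q') 0 := by
    intro Q' hQ'
    rw [hJeq Q hQ, hJeq Q' hQ']
    exact isMinOn_iff.mp hmin Q' hQ'
  refine ⟨Q, hQ, ?_, hmin'⟩
  rw [erExp, set_eq (fun Q => klDiv2 Q P + max (R - condEnt1 Q) 0)]
  exact sInf_image_eq hQ hmin'

lemma DH_min (P : X × Y → ℝ) (hP : ∀ z, 0 < P z) (hP1 : ∑ z : X × Y, P z = 1) :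
    ∃ Q0 ∈ stdSimplex ℝ (X × Y), ∀ Q' ∈ stdSimplex ℝ (X × Y),
      klDiv2 Q0 P - condEnt1 Q0 ≤ klDiv2 Q' P - condEnt1 Q' := by
  have hcont : Continuous fun Q : X × Y → ℝ =>
      (entF Q - linF P Q) - (mEntF Q - entF Q) :=
    (cont_entF.sub (cont_linF P)).sub (cont_mEntF.sub cont_entF)
  have hne : (stdSimplex ℝ (X × Y)).Nonempty := ⟨P, fun z => (hP z).le, hP1⟩
  obtain ⟨Q, hQ, hmin⟩ := (isCompact_stdSimplex ℝ (X × Y)).exists_isMinOn hne hcont.continuousOn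
  refine ⟨Q, hQ, fun Q' hQ' => ?_⟩
  rw [klDiv2_eq P Q hP hQ.1, condEnt1_eq Q hQ.1, klDiv2_eq P Q' hP hQ'.1,
    condEnt1_eq Q' hQ'.1]
  exact isMinOn_iff.mp hmin Q' hQ'


end Stmt17Aux

/-- For `R ≤ R_cr(P)`, the exponent simplifies to the constrained form
`e_r(R,P) = min{D(Q‖P) : H_Q(X̃|Ỹ) ≥ R}`; in particular the clipped-rate term
`|R − H_Q|⁺` vanishes at a minimizer. -/
theorem stmt17 (X Y : Type) [Fintype X] [Fintype Y] [Nonempty X] [Nonempty Y]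
    (P : X × Y → ℝ) (hP0 : ∀ z, 0 < P z) (hP1 : ∑ z : X × Y, P z = 1)
    (R : ℝ) (hR : R ≤ Rcr P) :
    erExp R P = sInf { e | ∃ Q : X × Y → ℝ, (∀ z, 0 ≤ Q z) ∧
      (∑ z : X × Y, Q z = 1) ∧ R ≤ condEnt1 Q ∧ e = klDiv2 Q P } ∧
    ∃ Q : X × Y → ℝ, (∀ z, 0 ≤ Q z) ∧ (∑ z : X × Y, Q z = 1) ∧
      R ≤ condEnt1 Q ∧ klDiv2 Q P = erExp R P := by
  classical
  obtain ⟨Q0, hQ0S, hQ0min⟩ := Stmt17Aux.DH_min P hP0 hP1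
  -- lower bounds on erExp
  have hlow : ∀ R' : ℝ,
      (klDiv2 Q0 P - condEnt1 Q0) + R' ≤ erExp R' P ∧ 0 ≤ erExp R' P := by
    intro R'
    obtain ⟨Q, hQS, hEq, -⟩ := Stmt17Aux.erExp_min P hP0 hP1 R'
    constructor
    · rw [hEq]
      have h1 : klDiv2 Q0 P - condEnt1 Q0 ≤ klDiv2 Q P - condEnt1 Q := hQ0min Q hQS
      have h2 : R' - condEnt1 Q ≤ max (R' - condEnt1 Q) 0 := le_max_left _ _
      linarith
    · rw [hEq]
      have h3 := Stmt17Aux.klDiv2_nonneg P Q hP0 hQS.1 hQS.2 hP1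
      have h4 := le_max_right (R' - condEnt1 Q) 0
      linarith
  have hupp : ∀ R' : ℝ, ∀ Q ∈ stdSimplex ℝ (X × Y),
      erExp R' P ≤ klDiv2 Q P + max (R' - condEnt1 Q) 0 := by
    intro R' Q hQ
    obtain ⟨Qm, hQmS, hEq, hmin⟩ := Stmt17Aux.erExp_min P hP0 hP1 R'
    rw [hEq]
    exact hmin Q hQ
  -- value of erExp at R' = condEnt1 Q0
  have hErH0 : erExp (condEnt1 Q0) P = klDiv2 Q0 P := by
    apply le_antisymm
    · have h := hupp (condEnt1 Q0) Q0 hQ0S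
      rwa [sub_self, max_self, add_zero] at h
    · have h := (hlow (condEnt1 Q0)).1
      linarith
  -- intercept identification
  have hB : slopeOneIntercept P = klDiv2 Q0 P - condEnt1 Q0 := by
    have hlb : ∀ b ∈ {b | ∃ R' : ℝ, b = erExp R' P - R'}, klDiv2 Q0 P - condEnt1 Q0 ≤ b := by
      rintro b ⟨R', rfl⟩
      have h := (hlow R').1
      linarith
    have hmem : klDiv2 Q0 P - condEnt1 Q0 ∈ {b | ∃ R' : ℝ, b = erExp R' P - R'} :=
      ⟨condEnt1 Q0, by rw [hErH0]⟩
    exact le_antisymm (csInf_le ⟨_, hlb⟩ hmem) (le_csInf ⟨_, hmem⟩ hlb)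
  -- R ≤ condEnt1 Q0
  have hRH0 : R ≤ condEnt1 Q0 := by
    have hmem : condEnt1 Q0 ∈ {R' | erExp R' P = R' + slopeOneIntercept P} := by
      rw [Set.mem_setOf_eq, hB, hErH0]
      ring
    have hbdd : BddBelow {R' | erExp R' P = R' + slopeOneIntercept P} := by
      refine ⟨-(klDiv2 Q0 P - condEnt1 Q0), ?_⟩
      rintro R' hR'
      rw [Set.mem_setOf_eq, hB] at hR'
      have h := (hlow R').2
      rw [hR'] at h
      linarith
    exact le_trans hR (csInf_le hbdd hmem)
  -- minimizer at rate R
  obtain ⟨Qs, hQsS, hEqs, hmins⟩ := Stmt17Aux.erExp_min P hP0 hP1 R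
  have main : ∃ Qf, Qf ∈ stdSimplex ℝ (X × Y) ∧ R ≤ condEnt1 Qf ∧
      klDiv2 Qf P = erExp R P := by
    by_cases hc : R ≤ condEnt1 Qs
    · refine ⟨Qs, hQsS, hc, ?_⟩
      rw [hEqs, max_eq_right (by linarith : R - condEnt1 Qs ≤ 0), add_zero]
    · push_neg at hc
      have hqcont : Continuous fun t : ℝ =>
          Stmt17Aux.mEntF (fun z => (1 - t) * Qs z + t * Q0 z)
            - Stmt17Aux.entF (fun z => (1 - t) * Qs z + t * Q0 z) := by
        have hq' : Continuous fun t : ℝ => (fun z => (1 - t) * Qs z + t * Q0 z) :=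
          continuous_pi fun z =>
            (((continuous_const.sub continuous_id).mul continuous_const).add
              (continuous_id.mul continuous_const))
        exact (Stmt17Aux.cont_mEntF.comp hq').sub (Stmt17Aux.cont_entF.comp hq')
      have hmem01 : ∀ t ∈ Set.Icc (0:ℝ) 1,
          (fun z => (1 - t) * Qs z + t * Q0 z) ∈ stdSimplex ℝ (X × Y) := by
        intro t ht
        constructor
        · intro z
          show (0:ℝ) ≤ (1 - t) * Qs z + t * Q0 z
          have h1 := hQsS.1 z
          have h2 := hQ0S.1 z
          have h3 := ht.1
          have h4 := ht.2
          nlinarith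
        · show ∑ z : X × Y, ((1 - t) * Qs z + t * Q0 z) = 1
          rw [Finset.sum_add_distrib, ← Finset.mul_sum, ← Finset.mul_sum, hQsS.2, hQ0S.2]
          ring
      have h0v : Stmt17Aux.mEntF (fun z => (1 - (0:ℝ)) * Qs z + 0 * Q0 z)
          - Stmt17Aux.entF (fun z => (1 - (0:ℝ)) * Qs z + 0 * Q0 z) = condEnt1 Qs := by
        have he : (fun z => (1 - (0:ℝ)) * Qs z + 0 * Q0 z) = Qs := by
          funext z; ring
        rw [he, Stmt17Aux.condEnt1_eq Qs hQsS.1]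
      have h1v : Stmt17Aux.mEntF (fun z => (1 - (1:ℝ)) * Qs z + 1 * Q0 z)
          - Stmt17Aux.entF (fun z => (1 - (1:ℝ)) * Qs z + 1 * Q0 z) = condEnt1 Q0 := by
        have he : (fun z => (1 - (1:ℝ)) * Qs z + 1 * Q0 z) = Q0 := by
          funext z; ring
        rw [he, Stmt17Aux.condEnt1_eq Q0 hQ0S.1]
      have hIVT := intermediate_value_Icc (by norm_num : (0:ℝ) ≤ 1) hqcont.continuousOn
      have hRmem : R ∈ Set.Icc
          (Stmt17Aux.mEntF (fun z => (1 - (0:ℝ)) * Qs z + 0 * Q0 z)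
            - Stmt17Aux.entF (fun z => (1 - (0:ℝ)) * Qs z + 0 * Q0 z))
          (Stmt17Aux.mEntF (fun z => (1 - (1:ℝ)) * Qs z + 1 * Q0 z)
            - Stmt17Aux.entF (fun z => (1 - (1:ℝ)) * Qs z + 1 * Q0 z)) := by
        rw [h0v, h1v]
        exact ⟨hc.le, hRH0⟩
      obtain ⟨t, ht01, htR⟩ := hIVT hRmem
      set Qf : X × Y → ℝ := fun z => (1 - t) * Qs z + t * Q0 z with hQf
      have hQfS : Qf ∈ stdSimplex ℝ (X × Y) := hmem01 t ht01
      have hHQf : condEnt1 Qf = R := by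
        rw [Stmt17Aux.condEnt1_eq _ hQfS.1]
        exact htR
      have hconv : Stmt17Aux.DHlog P Qf
          ≤ (1 - t) * Stmt17Aux.DHlog P Qs + t * Stmt17Aux.DHlog P Q0 :=
        Stmt17Aux.DHlog_convex hP0 hQsS.1 hQ0S.1 ht01.1 ht01.2
      have hlog2 : (0:ℝ) < Real.log 2 := Real.log_pos one_lt_two
      have hm0 : klDiv2 Q0 P - condEnt1 Q0 ≤ klDiv2 Qs P - condEnt1 Qs := hQ0min Qs hQsS
      have e0 := Stmt17Aux.DH_eq P Qs
      have e1 := Stmt17Aux.DH_eq P Q0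
      have ef := Stmt17Aux.DH_eq P Qf
      have hm0' : Stmt17Aux.DHlog P Q0 ≤ Stmt17Aux.DHlog P Qs := by
        rw [e0, e1] at hm0
        exact (div_le_div_iff_of_pos_right hlog2).mp hm0
      have hle : Stmt17Aux.DHlog P Qf ≤ Stmt17Aux.DHlog P Qs := by
        nlinarith [ht01.1, ht01.2]
      have hDH : klDiv2 Qf P - condEnt1 Qf ≤ klDiv2 Qs P - condEnt1 Qs := by
        rw [ef, e0]
        exact div_le_div_of_nonneg_right hle hlog2.le
      refine ⟨Qf, hQfS, le_of_eq hHQf.symm, le_antisymm ?_ ?_⟩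
      · have hEqs' : erExp R P = klDiv2 Qs P + (R - condEnt1 Qs) := by
          rw [hEqs, max_eq_left (by linarith : (0:ℝ) ≤ R - condEnt1 Qs)]
        rw [hEqs']
        linarith [hDH, hHQf]
      · have h := hmins Qf hQfS
        rw [hHQf, sub_self, max_self, add_zero] at h
        rw [hEqs]
        exact h
  obtain ⟨Qf, hQfS, hHf, hKf⟩ := main
  have hlbE : ∀ e ∈ { e | ∃ Q : X × Y → ℝ, (∀ z, 0 ≤ Q z) ∧
      (∑ z : X × Y, Q z = 1) ∧ R ≤ condEnt1 Q ∧ e = klDiv2 Q P }, erExp R P ≤ e := by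
    rintro e ⟨Q, h1, h2, h3, rfl⟩
    have h := hupp R Q ⟨h1, h2⟩
    rwa [max_eq_right (by linarith : R - condEnt1 Q ≤ 0), add_zero] at h
  have hmemE : erExp R P ∈ { e | ∃ Q : X × Y → ℝ, (∀ z, 0 ≤ Q z) ∧
      (∑ z : X × Y, Q z = 1) ∧ R ≤ condEnt1 Q ∧ e = klDiv2 Q P } :=
    ⟨Qf, hQfS.1, hQfS.2, hHf, hKf.symm⟩
  exact ⟨le_antisymm (le_csInf ⟨_, hmemE⟩ hlbE) (csInf_le ⟨_, hlbE⟩ hmemE),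
    ⟨Qf, hQfS.1, hQfS.2, hHf, hKf⟩⟩
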